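/- Let λ be an infinite cardinal. If Jensen's principle □_λ holds, then λ⁺ ∈ I[λ⁺] (i.e., the set of all ordinals below λ⁺ belongs to I[λ⁺]). -/

import Mathlib

set_option autoImplicit false
open Cardinal

universe u

open Cardinal Set

/-- The order type of a set of ordinals. -/
noncomputable def otp (s : Set Ordinal.{u}) : Ordinal.{u + 1} :=
  Ordinal.type ((· < ·) : s → s → Prop)

/-- `C` is a closed subset of the ordinal `δ`: `C ⊆ δ` and `C` contains the supremum of
each of its nonempty subsets whose supremum is below `δ`. -/
def IsClosedIn (C : Set Ordinal.{u}) (δ : Ordinal.{u}) : Prop :=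
  C ⊆ Set.Iio δ ∧ ∀ s ⊆ C, s.Nonempty → sSup s < δ → sSup s ∈ C

/-- `C` is a club (closed unbounded) subset of the ordinal `δ`. -/
def IsClubIn (C : Set Ordinal.{u}) (δ : Ordinal.{u}) : Prop :=
  IsClosedIn C δ ∧ ∀ α < δ, ∃ β ∈ C, α < β

/-- The nonaccumulation points of a set of ordinals `C`. -/
def nacc (C : Set Ordinal.{u}) : Set Ordinal.{u} :=
  {α ∈ C | sSup (C ∩ Set.Iio α) < α}

/-- `A` belongs to the ideal `I[κ]`: `A ⊆ κ`, the set of regular ordinals in `A` is not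
stationary in `κ`, and there is a sequence `⟨P_α : α < κ⟩`, with each `P_α` a family of
fewer than `κ` subsets of `α`, such that every limit `α ∈ A` with `cf α < α` carries a
cofinal subset `x ⊆ α` of order type `< α` all of whose initial segments appear in
`⋃_{γ < α} P_γ`. -/
def MemIdealI (κ : Cardinal.{u}) (A : Set Ordinal.{u}) : Prop :=
  A ⊆ Set.Iio κ.ord ∧
  (∃ E : Set Ordinal.{u}, IsClubIn E κ.ord ∧
    ∀ δ ∈ A, δ ∈ E → δ.cof.ord ≠ δ) ∧
  ∃ P : Ordinal.{u} → Set (Set Ordinal.{u}),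
    (∀ α < κ.ord, (∀ x ∈ P α, x ⊆ Set.Iio α) ∧ Cardinal.mk (P α) < Cardinal.lift.{u+1} κ) ∧
    ∀ α ∈ A, Order.IsSuccLimit α → α.cof.ord < α →
      ∃ x : Set Ordinal.{u}, x ⊆ Set.Iio α ∧ otp x < Ordinal.lift.{u+1} α ∧ sSup x = α ∧
        ∀ β < α, x ∩ Set.Iio β ∈ ⋃ γ ∈ Set.Iio α, P γ

/-- Jensen's principle `□_l` for an infinite cardinal `l`: there is a sequence assigning
to each limit ordinal `α < l⁺` a club `C_α ⊆ α` of order type `≤ l` which is coherent at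
limit points. -/
def SquarePrinciple (l : Cardinal.{u}) : Prop :=
  ∃ C : Ordinal.{u} → Set Ordinal.{u},
    ∀ α : Ordinal.{u}, Order.IsSuccLimit α → α < (Order.succ l).ord →
      IsClubIn (C α) α ∧ otp (C α) ≤ Ordinal.lift.{u+1} l.ord ∧
      ∀ β < α, (C α ∩ Set.Iio β).Nonempty → sSup (C α ∩ Set.Iio β) = β →
        C β = C α ∩ Set.Iio β

/-! ### Auxiliary machinery -/

section Aux
open Ordinal

theorem otp_mono {s t : Set Ordinal.{u}} (h : s ⊆ t) : otp s ≤ otp t := by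
  refine RelEmbedding.ordinal_type_le ⟨⟨Set.inclusion h, Set.inclusion_injective h⟩, ?_⟩
  intro a b
  exact Iff.rfl

theorem otp_inter_Iio {D : Set Ordinal.{u}} {d : Ordinal.{u}} (hd : d ∈ D) :
    otp (D ∩ Set.Iio d) = Ordinal.typein ((· < ·) : D → D → Prop) ⟨d, hd⟩ := by
  rw [← Ordinal.type_subrel]
  apply Ordinal.type_eq.2
  exact ⟨⟨⟨fun x => ⟨⟨x.1, x.2.1⟩, x.2.2⟩, fun x => ⟨x.1.1, x.1.2, x.2⟩,
    fun x => rfl, fun x => rfl⟩, Iff.rfl⟩⟩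

theorem otp_pos_lt {D : Set Ordinal.{u}} {d : Ordinal.{u}} (hd : d ∈ D) :
    otp (D ∩ Set.Iio d) < otp D := by
  rw [otp_inter_Iio hd]
  exact Ordinal.typein_lt_type _ _

theorem otp_pos_strictMono {D : Set Ordinal.{u}} {d d' : Ordinal.{u}} (hd : d ∈ D)
    (hd' : d' ∈ D) (h : d < d') : otp (D ∩ Set.Iio d) < otp (D ∩ Set.Iio d') := by
  rw [otp_inter_Iio hd, otp_inter_Iio hd']
  exact (Ordinal.typein_lt_typein _).2 h

theorem otp_pos_surj {D : Set Ordinal.{u}} {ξ : Ordinal.{u+1}} (h : ξ < otp D) :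
    ∃ d, d ∈ D ∧ otp (D ∩ Set.Iio d) = ξ := by
  obtain ⟨a, ha⟩ := Ordinal.typein_surj ((· < ·) : D → D → Prop) h
  exact ⟨a.1, a.2, by rw [otp_inter_Iio a.2]; exact ha⟩

theorem infinite_of_otp_eq_omega0 {s : Set Ordinal.{u}} (h : otp s = Ordinal.omega0) :
    s.Infinite := by
  rw [← Set.infinite_coe_iff]
  refine Cardinal.infinite_iff.2 ?_
  have h1 : (otp s).card = Cardinal.aleph0 := by rw [h]; exact Ordinal.card_omega0
  have h2 : (otp s).card = #s := Ordinal.card_type _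
  rw [h2] at h1
  exact h1.ge

/-- A chosen fundamental sequence for each ordinal. -/
noncomputable def fseq (ρ : Ordinal.{u}) : ∀ b < ρ.cof.ord, Ordinal.{u} :=
  (Ordinal.exists_fundamental_sequence ρ).choose

theorem fseq_spec (ρ : Ordinal.{u}) : Ordinal.IsFundamentalSequence ρ ρ.cof.ord (fseq ρ) :=
  (Ordinal.exists_fundamental_sequence ρ).choose_spec

/-- The range of the chosen fundamental sequence. -/
def Tset (ρ : Ordinal.{u}) : Set Ordinal.{u} :=
  {x | ∃ ξ, ∃ h : ξ < ρ.cof.ord, fseq ρ ξ h = x}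

theorem Tset_lt {ρ x : Ordinal.{u}} (hx : x ∈ Tset ρ) : x < ρ := by
  obtain ⟨ξ, h, rfl⟩ := hx
  have := Ordinal.lt_blsub (fseq ρ) ξ h
  rwa [(fseq_spec ρ).blsub_eq] at this

theorem Tset_unbounded {ρ β : Ordinal.{u}} (h : β < ρ) : ∃ x ∈ Tset ρ, β ≤ x := by
  rw [← (fseq_spec ρ).blsub_eq, Ordinal.lt_blsub_iff] at h
  obtain ⟨i, hi, hle⟩ := h
  exact ⟨fseq ρ i hi, ⟨i, hi, rfl⟩, hle⟩

/-- The subset of `D` consisting of elements whose position in `D` lies in `Tset ρ`. -/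
noncomputable def mapSet (D : Set Ordinal.{u}) (ρ : Ordinal.{u+1}) : Set Ordinal.{u} :=
  {d | d ∈ D ∧ otp (D ∩ Set.Iio d) ∈ Tset ρ}

theorem mapSet_subset (D : Set Ordinal.{u}) (ρ : Ordinal.{u+1}) : mapSet D ρ ⊆ D :=
  fun _ hd => hd.1

theorem inter_Iio_inter_Iio {D : Set Ordinal.{u}} {δ d : Ordinal.{u}} (h : d ≤ δ) :
    (D ∩ Set.Iio δ) ∩ Set.Iio d = D ∩ Set.Iio d := by
  ext y
  simp only [Set.mem_inter_iff, Set.mem_Iio, and_assoc]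
  exact ⟨fun ⟨a, _, c⟩ => ⟨a, c⟩, fun ⟨a, c⟩ => ⟨a, lt_of_lt_of_le c h, c⟩⟩

theorem mapSet_inter_Iio (D : Set Ordinal.{u}) (ρ : Ordinal.{u+1}) (δ : Ordinal.{u}) :
    mapSet D ρ ∩ Set.Iio δ = mapSet (D ∩ Set.Iio δ) ρ := by
  ext d
  constructor
  · rintro ⟨⟨hdD, hT⟩, hdδ⟩
    refine ⟨⟨hdD, hdδ⟩, ?_⟩
    rwa [inter_Iio_inter_Iio (le_of_lt hdδ)]
  · rintro ⟨⟨hdD, hdδ⟩, hT⟩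
    rw [inter_Iio_inter_Iio (le_of_lt hdδ)] at hT
    exact ⟨⟨hdD, hT⟩, hdδ⟩

theorem mapSet_unbounded {α : Ordinal.{u}} {D : Set Ordinal.{u}}
    (hunb : ∀ β < α, ∃ d ∈ D, β < d) {β : Ordinal.{u}} (hβ : β < α) :
    ∃ d ∈ mapSet D (otp D), β < d := by
  obtain ⟨d0, hd0, hβd0⟩ := hunb β hβ
  obtain ⟨t, htT, htle⟩ := Tset_unbounded (otp_pos_lt hd0)
  obtain ⟨d, hdD, hdt⟩ := otp_pos_surj (Tset_lt htT)
  refine ⟨d, ⟨hdD, by rw [hdt]; exact htT⟩, ?_⟩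
  rcases lt_or_ge β d with h | h
  · exact h
  · exfalso
    have hdd0 : d < d0 := lt_of_le_of_lt h hβd0
    have := otp_pos_strictMono hdD hd0 hdd0
    rw [hdt] at this
    exact absurd htle (not_le.2 this)

theorem otp_mapSet_le (D : Set Ordinal.{u}) (ρ : Ordinal.{u+1}) :
    otp (mapSet D ρ) ≤ ρ.cof.ord := by
  classical
  set c := ρ.cof.ord with hc
  have key : ∀ x : ↥(mapSet D ρ),
      {ξ : Ordinal.{u+1} | ∃ h : ξ < c, fseq ρ ξ h = otp (D ∩ Set.Iio x.1)}.Nonempty := by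
    rintro ⟨x, hxD, ξ, hξ, he⟩
    exact ⟨ξ, hξ, he⟩
  let I : ↥(mapSet D ρ) → Ordinal.{u+1} := fun x =>
    sInf {ξ : Ordinal.{u+1} | ∃ h : ξ < c, fseq ρ ξ h = otp (D ∩ Set.Iio x.1)}
  have hI : ∀ x, ∃ h : I x < c, fseq ρ (I x) h = otp (D ∩ Set.Iio x.1) := fun x =>
    csInf_mem (key x)
  have hImono : ∀ x y : ↥(mapSet D ρ), x.1 < y.1 → I x < I y := by
    intro x y hxy
    obtain ⟨hx, hex⟩ := hI x
    obtain ⟨hy, hey⟩ := hI y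
    have hpos : otp (D ∩ Set.Iio x.1) < otp (D ∩ Set.Iio y.1) :=
      otp_pos_strictMono x.2.1 y.2.1 hxy
    rcases lt_trichotomy (I x) (I y) with h | h | h
    · exact h
    · exfalso
      rw [← hex, ← hey] at hpos
      simp only [h] at hpos
      exact absurd hpos (lt_irrefl _)
    · exfalso
      have := (fseq_spec ρ).strict_mono hy hx h
      rw [hex, hey] at this
      exact absurd hpos (not_lt.2 this.le)
  let g : ↥(mapSet D ρ) → c.ToType := fun x =>
    Ordinal.ToType.mk (o := c) ⟨I x, (hI x).fst⟩
  have hg : ∀ x y : ↥(mapSet D ρ), x < y → g x < g y := by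
    intro x y hxy
    apply (Ordinal.ToType.mk (o := c)).lt_iff_lt.2
    exact Subtype.mk_lt_mk.2 (hImono x y hxy)
  have hgsm : StrictMono g := fun x y h => hg x y h
  haveI inst : IsWellOrder c.ToType (· < ·) := isWellOrder_lt
  haveI inst2 : IsWellOrder (↥(mapSet D ρ)) (· < ·) := isWellOrder_lt
  have := RelEmbedding.ordinal_type_le
    (OrderEmbedding.ltEmbedding (OrderEmbedding.ofStrictMono g hgsm))
  rwa [Ordinal.type_toType] at this

theorem cof_otp_le_lift {α : Ordinal.{u}} {D : Set Ordinal.{u}} (hsub : D ⊆ Set.Iio α)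
    (hunb : ∀ β < α, ∃ d ∈ D, β < d) :
    (otp D).cof ≤ Cardinal.lift.{u+1} α.cof := by
  obtain ⟨ι, f, hlsub, hmk⟩ := Ordinal.exists_lsub_cof α
  let F : ι → Ordinal.{u+1} := fun i => otp (D ∩ Set.Iio (f i))
  have hFlt : ∀ i, F i < otp D := by
    intro i
    have hfi : f i < α := by rw [← hlsub]; exact Ordinal.lt_lsub f i
    obtain ⟨d, hdD, hfd⟩ := hunb (f i) hfi
    exact lt_of_le_of_lt (otp_mono (Set.inter_subset_inter_right D (Set.Iio_subset_Iio hfd.le)))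
      (otp_pos_lt hdD)
  have hlsubF : Ordinal.lsub.{u, u+1} F = otp D := by
    apply le_antisymm
    · exact Ordinal.lsub_le hFlt
    · by_contra hlt
      push_neg at hlt
      obtain ⟨d, hdD, hde⟩ := otp_pos_surj hlt
      have hdα : d < α := hsub hdD
      rw [← hlsub, Ordinal.lt_lsub_iff] at hdα
      obtain ⟨i, hdi⟩ := hdα
      have : otp (D ∩ Set.Iio d) ≤ F i :=
        otp_mono (Set.inter_subset_inter_right D (Set.Iio_subset_Iio hdi))
      rw [hde] at this
      exact absurd (Ordinal.lt_lsub F i) (not_lt.2 this)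
  calc (otp D).cof = (Ordinal.lsub.{u, u+1} F).cof := by rw [hlsubF]
    _ ≤ Cardinal.lift.{u+1} #ι := Ordinal.cof_lsub_le_lift F
    _ = Cardinal.lift.{u+1} α.cof := by rw [hmk]

theorem sSup_eq_of_unbounded {x : Set Ordinal.{u}} {α : Ordinal.{u}} (h0 : 0 < α)
    (hsub : x ⊆ Set.Iio α) (hunb : ∀ β < α, ∃ d ∈ x, β < d) : sSup x = α := by
  obtain ⟨d0, hd0, _⟩ := hunb 0 h0
  have hbdd : BddAbove x := ⟨α, fun y hy => (hsub hy).le⟩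
  apply le_antisymm
  · exact csSup_le ⟨d0, hd0⟩ fun y hy => (hsub hy).le
  · by_contra hlt
    push_neg at hlt
    obtain ⟨d, hd, hgt⟩ := hunb _ hlt
    exact absurd (le_csSup hbdd hd) (not_le.2 hgt)

theorem mk_finsubsets_le (γ : Ordinal.{u}) :
    #({x : Set Ordinal.{u} | x.Finite ∧ x ⊆ Set.Iio γ}) ≤
      max ℵ₀ (Cardinal.lift.{u+1} γ.card) := by
  classical
  set S := {x : Set Ordinal.{u} | x.Finite ∧ x ⊆ Set.Iio γ} with hS
  let f : ↥S → Finset ↥(Set.Iio γ) := fun x =>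
    Set.Finite.toFinset
      ((x.2.1).preimage (Set.injOn_of_injective Subtype.val_injective))
  have hf : Function.Injective f := by
    intro a b hab
    apply Subtype.ext
    have h1 : (Subtype.val ⁻¹' a.1 : Set ↥(Set.Iio γ)) = Subtype.val ⁻¹' b.1 := by
      have := congrArg (fun t : Finset ↥(Set.Iio γ) => (t : Set ↥(Set.Iio γ))) hab
      simpa [f, Set.Finite.coe_toFinset] using this
    have h2 : Subtype.val '' (Subtype.val ⁻¹' a.1 : Set ↥(Set.Iio γ)) = a.1 :=
      Set.image_preimage_eq_of_subset (by rw [Subtype.range_val]; exact a.2.2)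
    have h3 : Subtype.val '' (Subtype.val ⁻¹' b.1 : Set ↥(Set.Iio γ)) = b.1 :=
      Set.image_preimage_eq_of_subset (by rw [Subtype.range_val]; exact b.2.2)
    rw [← h2, ← h3, h1]
  calc #S ≤ #(Finset ↥(Set.Iio γ)) := Cardinal.mk_le_of_injective hf
    _ ≤ #(Multiset ↥(Set.Iio γ)) := Cardinal.mk_le_of_injective Finset.val_injective
    _ ≤ #(List ↥(Set.Iio γ)) := Cardinal.mk_quotient_le
    _ ≤ max ℵ₀ #(↥(Set.Iio γ)) := Cardinal.mk_list_le_max _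
    _ = max ℵ₀ (Cardinal.lift.{u+1} γ.card) := by rw [Ordinal.mk_Iio_ordinal]

theorem mk_Iic_ordinal (γ : Ordinal.{u}) :
    #(Set.Iic γ) = Cardinal.lift.{u+1} (γ.card + 1) := by
  rw [← Order.Iio_succ, Ordinal.mk_Iio_ordinal, Ordinal.card_succ]

theorem mk_P_le {l : Cardinal.{u}} (hl : ℵ₀ ≤ l) (C : Ordinal.{u} → Set Ordinal.{u})
    {γ : Ordinal.{u}} (hγ : γ.card ≤ l) :
    #({x : Set Ordinal.{u} | (x.Finite ∧ x ⊆ Set.Iio γ) ∨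
      ∃ δ < γ, ∃ ρ ≤ l.ord, ∃ β ≤ γ,
        x = mapSet (C δ ∩ Set.Iio δ) (Ordinal.lift.{u+1} ρ) ∩ Set.Iio β}) ≤
      Cardinal.lift.{u+1} l := by
  classical
  have hll : ℵ₀ ≤ Cardinal.lift.{u+1} l := Cardinal.aleph0_le_lift.2 hl
  set S1 := {x : Set Ordinal.{u} | x.Finite ∧ x ⊆ Set.Iio γ} with hS1
  set g : ↥(Set.Iio γ) × ↥(Set.Iic l.ord) × ↥(Set.Iic γ) → Set Ordinal.{u} := fun p =>
    mapSet (C p.1.1 ∩ Set.Iio p.1.1) (Ordinal.lift.{u+1} p.2.1.1) ∩ Set.Iio p.2.2.1 with hg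
  have hsub : {x : Set Ordinal.{u} | (x.Finite ∧ x ⊆ Set.Iio γ) ∨
      ∃ δ < γ, ∃ ρ ≤ l.ord, ∃ β ≤ γ,
        x = mapSet (C δ ∩ Set.Iio δ) (Ordinal.lift.{u+1} ρ) ∩ Set.Iio β} ⊆
      S1 ∪ Set.range g := by
    rintro x (h | ⟨δ, hδ, ρ, hρ, β, hβ, rfl⟩)
    · exact Or.inl h
    · exact Or.inr ⟨⟨⟨δ, hδ⟩, ⟨ρ, hρ⟩, ⟨β, hβ⟩⟩, rfl⟩
  have h1 : #S1 ≤ Cardinal.lift.{u+1} l :=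
    (mk_finsubsets_le γ).trans (max_le hll (Cardinal.lift_le.2 hγ))
  have hA : #(↥(Set.Iio γ)) ≤ Cardinal.lift.{u+1} l := by
    rw [Ordinal.mk_Iio_ordinal]; exact Cardinal.lift_le.2 hγ
  have hsucc : ∀ c : Cardinal.{u}, c ≤ l → c + 1 ≤ l := fun c hc =>
    (add_le_add hc (Cardinal.one_lt_aleph0.le.trans hl)).trans (Cardinal.add_eq_self hl).le
  have hB : #(↥(Set.Iic l.ord)) ≤ Cardinal.lift.{u+1} l := by
    rw [mk_Iic_ordinal]
    exact Cardinal.lift_le.2 (hsucc _ (by rw [Cardinal.card_ord]))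
  have hCc : #(↥(Set.Iic γ)) ≤ Cardinal.lift.{u+1} l := by
    rw [mk_Iic_ordinal]
    exact Cardinal.lift_le.2 (hsucc _ hγ)
  have h2 : #(Set.range g) ≤ Cardinal.lift.{u+1} l := by
    refine Cardinal.mk_range_le.trans ?_
    have hprod : #(↥(Set.Iio γ) × ↥(Set.Iic l.ord) × ↥(Set.Iic γ)) ≤
        Cardinal.lift.{u+1} l * (Cardinal.lift.{u+1} l * Cardinal.lift.{u+1} l) := by
      rw [Cardinal.mk_prod, Cardinal.mk_prod, Cardinal.lift_id, Cardinal.lift_id,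
        Cardinal.lift_id, Cardinal.lift_id]
      exact mul_le_mul' hA (mul_le_mul' hB hCc)
    refine hprod.trans ?_
    rw [Cardinal.mul_eq_self hll, Cardinal.mul_eq_self hll]
  calc #(_ : Set (Set Ordinal.{u})) ≤ #(↥(S1 ∪ Set.range g)) :=
      Cardinal.mk_le_mk_of_subset hsub
    _ ≤ #S1 + #(Set.range g) := Cardinal.mk_union_le _ _
    _ ≤ Cardinal.lift.{u+1} l + Cardinal.lift.{u+1} l := add_le_add h1 h2
    _ = Cardinal.lift.{u+1} l := Cardinal.add_eq_self hll

end Aux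

/-- If `l` is an infinite cardinal and `□_l` holds, then `l⁺ ∈ I[l⁺]`. -/
theorem square_implies_succ_mem_idealI (l : Cardinal.{u}) (hl : ℵ₀ ≤ l)
    (hsq : SquarePrinciple l) :
    MemIdealI (Order.succ l) (Set.Iio (Order.succ l).ord) := by
  classical
  obtain ⟨C, hC⟩ := hsq
  have hκlim : Order.IsSuccLimit ((Order.succ l).ord) :=
    Cardinal.isSuccLimit_ord (hl.trans (Order.le_succ l))
  have hlκ : l.ord < (Order.succ l).ord := Cardinal.ord_lt_ord.2 (Order.lt_succ l)
  refine ⟨fun _ h => h, ?_, ?_⟩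
  · -- the club of non-regular ordinals
    refine ⟨Set.Ioo l.ord (Order.succ l).ord, ⟨⟨fun y hy => hy.2, ?_⟩, ?_⟩, ?_⟩
    · intro s hs hne hsup
      obtain ⟨d, hd⟩ := hne
      exact ⟨lt_of_lt_of_le (hs hd).1
        (le_csSup ⟨(Order.succ l).ord, fun y hy => (hs hy).2.le⟩ hd), hsup⟩
    · intro β hβ
      refine ⟨Order.succ (max β l.ord),
        ⟨(le_max_right _ _).trans_lt (Order.lt_succ _), hκlim.succ_lt (max_lt hβ hlκ)⟩,
        (le_max_left _ _).trans_lt (Order.lt_succ _)⟩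
    · intro δ hδA hδE heq
      have h1 : δ.card ≤ l := Order.lt_succ_iff.1 (Cardinal.lt_ord.1 hδA)
      have h2 : δ.cof.ord ≤ l.ord := Cardinal.ord_le_ord.2 ((Ordinal.cof_le_card δ).trans h1)
      exact absurd heq (ne_of_lt (lt_of_le_of_lt h2 hδE.1))
  · -- the sequence of families
    refine ⟨fun γ => {x : Set Ordinal.{u} | (x.Finite ∧ x ⊆ Set.Iio γ) ∨
      ∃ δ < γ, ∃ ρ ≤ l.ord, ∃ β ≤ γ,
        x = mapSet (C δ ∩ Set.Iio δ) (Ordinal.lift.{u+1} ρ) ∩ Set.Iio β}, ?_, ?_⟩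
    · intro γ hγ
      constructor
      · rintro x (⟨_, hsub⟩ | ⟨δ, hδ, ρ, _, β, _, rfl⟩)
        · exact hsub
        · intro y hy
          exact lt_trans (mapSet_subset _ _ hy.1).2 hδ
      · have hγcard : γ.card ≤ l := Order.lt_succ_iff.1 (Cardinal.lt_ord.1 hγ)
        exact lt_of_le_of_lt (mk_P_le hl C hγcard) (Cardinal.lift_lt.2 (Order.lt_succ l))
    · intro α hα hlim hcof
      obtain ⟨hclub, hotp, hcoh⟩ := hC α hlim hα
      have hsubD : C α ⊆ Set.Iio α := hclub.1.1
      have hunbD : ∀ β < α, ∃ d ∈ C α, β < d := hclub.2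
      by_cases hAcase : ∀ β < α, ∃ δ, δ < α ∧ (C α ∩ Set.Iio δ).Nonempty ∧
          sSup (C α ∩ Set.Iio δ) = δ ∧ β ≤ δ
      · -- Case A : limit points of `C α` are cofinal in `α`
        obtain ⟨ρ', hρ'mem⟩ := Ordinal.mem_range_lift_of_le hotp
        have hρ'le : ρ' ≤ l.ord := Ordinal.lift_le.1 (by rw [hρ'mem]; exact hotp)
        have hxsub : mapSet (C α) (otp (C α)) ⊆ Set.Iio α :=
          fun d hd => hsubD (mapSet_subset _ _ hd)
        have hxunb : ∀ β < α, ∃ d ∈ mapSet (C α) (otp (C α)), β < d :=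
          fun β hβ => mapSet_unbounded hunbD hβ
        refine ⟨mapSet (C α) (otp (C α)), hxsub, ?_,
          sSup_eq_of_unbounded hlim.pos hxsub hxunb, ?_⟩
        · have h1 : otp (mapSet (C α) (otp (C α))) ≤ (otp (C α)).cof.ord :=
            otp_mapSet_le _ _
          have h2 : ((otp (C α)).cof).ord ≤ (Cardinal.lift.{u+1} α.cof).ord :=
            Cardinal.ord_le_ord.2 (cof_otp_le_lift hsubD hunbD)
          rw [← Cardinal.lift_ord] at h2
          exact lt_of_le_of_lt (h1.trans h2) (Ordinal.lift_lt.2 hcof)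
        · intro β hβ
          obtain ⟨δ, hδα, hδne, hδsup, hβδ⟩ := hAcase β hβ
          have hCδ : C δ = C α ∩ Set.Iio δ := hcoh δ hδα hδne hδsup
          rw [Set.mem_iUnion₂]
          refine ⟨Order.succ δ, hlim.succ_lt hδα, Or.inr ⟨δ, Order.lt_succ δ, ρ', hρ'le, β,
            hβδ.trans (Order.le_succ δ), ?_⟩⟩
          have hss : C δ ∩ Set.Iio δ = C α ∩ Set.Iio δ := by
            rw [hCδ, inter_Iio_inter_Iio le_rfl]
          rw [hρ'mem, hss, ← mapSet_inter_Iio, inter_Iio_inter_Iio hβδ]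
      · -- Case B : limit points of `C α` are bounded in `α`
        push_neg at hAcase
        obtain ⟨β₀, hβ₀α, hbd⟩ := hAcase
        have hxsub : C α ∩ Set.Ioi β₀ ⊆ Set.Iio α := fun y hy => hsubD hy.1
        have hxunb : ∀ β < α, ∃ d ∈ C α ∩ Set.Ioi β₀, β < d := by
          intro β hβ
          obtain ⟨d, hd, hmax⟩ := hunbD (max β β₀) (max_lt hβ hβ₀α)
          exact ⟨d, ⟨hd, lt_of_le_of_lt (le_max_right _ _) hmax⟩,
            lt_of_le_of_lt (le_max_left _ _) hmax⟩
        have hfin : ∀ β < α, ((C α ∩ Set.Ioi β₀) ∩ Set.Iio β).Finite := by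
          intro β hβ
          by_contra hinf
          set W := {μ : Ordinal.{u} | μ ≤ β ∧ ¬((C α ∩ Set.Ioi β₀) ∩ Set.Iio μ).Finite}
            with hW
          have hWne : W.Nonempty := ⟨β, le_rfl, hinf⟩
          have hμ₀ : sInf W ∈ W := csInf_mem hWne
          have hbdd : BddBelow W := ⟨0, fun y _ => zero_le (a := y)⟩
          have hμ₀pos : 0 < sInf W := by
            rcases eq_zero_or_pos (sInf W) with h | h
            · exfalso
              apply hμ₀.2
              apply Set.Finite.subset Set.finite_empty
              intro y hy
              rw [h] at hy
              exact absurd hy.2 (not_lt_zero (a := y))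
            · exact h
          have hub : ∀ ν < sInf W, ∃ e ∈ C α ∩ Set.Iio (sInf W), ν < e := by
            intro ν hν
            by_contra hcon
            push_neg at hcon
            have hs1 : (C α ∩ Set.Ioi β₀) ∩ Set.Iio (sInf W) ⊆
                (C α ∩ Set.Ioi β₀) ∩ Set.Iio (Order.succ ν) := by
              rintro y ⟨hy1, hy2⟩
              exact ⟨hy1, Order.lt_succ_iff.2 (hcon y ⟨hy1.1, hy2⟩)⟩
            have hsν : Order.succ ν ∈ W :=
              ⟨(Order.succ_le_of_lt hν).trans hμ₀.1, fun hf => hμ₀.2 (hf.subset hs1)⟩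
            have h2 : sInf W = Order.succ ν :=
              le_antisymm (csInf_le hbdd hsν) (Order.succ_le_of_lt hν)
            have hs2 : (C α ∩ Set.Ioi β₀) ∩ Set.Iio (sInf W) ⊆
                ((C α ∩ Set.Ioi β₀) ∩ Set.Iio ν) ∪ {ν} := by
              rintro y ⟨hy1, hy2⟩
              rw [Set.mem_Iio, h2, Order.lt_succ_iff] at hy2
              rcases lt_or_eq_of_le hy2 with h | h
              · exact Or.inl ⟨hy1, h⟩
              · exact Or.inr (by simp [h])
            have hνW : ν ∈ W := ⟨hν.le.trans hμ₀.1,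
              fun hf => hμ₀.2 ((hf.union (Set.finite_singleton ν)).subset hs2)⟩
            exact absurd (csInf_le hbdd hνW) (not_le.2 hν)
          have hne : (C α ∩ Set.Iio (sInf W)).Nonempty := by
            obtain ⟨e, he, _⟩ := hub 0 hμ₀pos
            exact ⟨e, he⟩
          have hsup : sSup (C α ∩ Set.Iio (sInf W)) = sInf W :=
            sSup_eq_of_unbounded hμ₀pos (fun y hy => hy.2) hub
          have hmem : ((C α ∩ Set.Ioi β₀) ∩ Set.Iio (sInf W)).Nonempty := by
            rcases Set.eq_empty_or_nonempty ((C α ∩ Set.Ioi β₀) ∩ Set.Iio (sInf W)) with h | h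
            · exact absurd (by rw [h]; exact Set.finite_empty) hμ₀.2
            · exact h
          obtain ⟨y, hy⟩ := hmem
          have hμ₀β₀ : β₀ < sInf W := lt_trans hy.1.2 hy.2
          have hμ₀α : sInf W < α := lt_of_le_of_lt hμ₀.1 hβ
          exact absurd (hbd (sInf W) hμ₀α hne hsup) (not_lt.2 hμ₀β₀.le)
        have hotpx : otp (C α ∩ Set.Ioi β₀) ≤ Ordinal.omega0 := by
          by_contra hgt
          push_neg at hgt
          obtain ⟨d, hdx, hdpos⟩ := otp_pos_surj hgt
          exact infinite_of_otp_eq_omega0 hdpos (hfin d (hxsub hdx))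
        have hωα : Ordinal.omega0 < α := by
          rcases lt_or_eq_of_le (Ordinal.omega0_le_of_isSuccLimit hlim) with h | h
          · exact h
          · exfalso
            rw [← h, Ordinal.cof_omega0, Cardinal.ord_aleph0] at hcof
            exact absurd hcof (lt_irrefl _)
        refine ⟨C α ∩ Set.Ioi β₀, hxsub, ?_,
          sSup_eq_of_unbounded hlim.pos hxsub hxunb, ?_⟩
        · calc otp (C α ∩ Set.Ioi β₀) ≤ Ordinal.omega0 := hotpx
            _ = Ordinal.lift.{u+1} Ordinal.omega0 := Ordinal.lift_omega0.symm
            _ < Ordinal.lift.{u+1} α := Ordinal.lift_lt.2 hωα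
        · intro β hβ
          rw [Set.mem_iUnion₂]
          exact ⟨β, hβ, Or.inl ⟨hfin β hβ, fun y hy => hy.2⟩⟩
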